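/- Let p be a prime, m a positive integer, F a finite field with p^m elements, and ω a generator of F^×. Let (d, e, s) and (d₁, e₁, s₁) be triples of integers each satisfying: d ≥ 1, d ∣ p^m − 1, s ≥ 1, s ∣ m, 0 ≤ e ≤ d − 1, and d ∣ e·(p^m−1)/(p^s−1) (and the analogous conditions for (d₁, e₁, s₁)). Let A be the subgroup of the permutation group of F generated by x ↦ ω^e·x^{p^s} and x ↦ ω^d·x, and let K be the subgroup generated by x ↦ ω^{e₁}·x^{p^{s₁}} and x ↦ ω^{d₁}·x, and suppose that K ≤ A. Then K is a normal subgroup of A if and only if d₁ divides d·(p^{s₁} − 1) and d₁ divides the integer e₁·(p^s − 1) − e·(p^{s₁} − 1). -/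

import Mathlib

noncomputable def powMulPerm {F : Type*} [Field F] [Finite F] (w : Fˣ) (n : ℕ)
    (h : Function.Injective fun x : F => x ^ n) : Equiv.Perm F :=
  (Equiv.ofBijective _ (Finite.injective_iff_bijective.mp h)).trans
    (Equiv.mulLeft₀ (w : F) w.ne_zero)

lemma powMulPerm_apply {F : Type*} [Field F] [Finite F] (w : Fˣ) (n : ℕ)
    (h : Function.Injective fun x : F => x ^ n) (x : F) :
    powMulPerm w n h x = (w : F) * x ^ n := rfl

/-- `geomT p s₁ c = 1 + p^{s₁} + ⋯ + p^{s₁(c-1)}`. -/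
def geomT (p s₁ : ℕ) (c : ℕ) : ℤ := ∑ i ∈ Finset.range c, (p : ℤ) ^ (s₁ * i)

lemma geomT_zero (p s₁ : ℕ) : geomT p s₁ 0 = 0 := by simp [geomT]

lemma geomT_one (p s₁ : ℕ) : geomT p s₁ 1 = 1 := by simp [geomT]

lemma geomT_add (p s₁ c c' : ℕ) :
    geomT p s₁ (c + c') = geomT p s₁ c + (p : ℤ) ^ (s₁ * c) * geomT p s₁ c' := by
  unfold geomT
  rw [Finset.sum_range_add, Finset.mul_sum]
  congr 1
  refine Finset.sum_congr rfl fun i _ => ?_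
  rw [← pow_add, Nat.mul_add]

lemma geomT_mul_eq (p s₁ c : ℕ) :
    geomT p s₁ c * ((p : ℤ) ^ s₁ - 1) = (p : ℤ) ^ (s₁ * c) - 1 := by
  have := geom_sum_mul ((p : ℤ) ^ s₁) c
  rw [pow_mul]
  rw [← this]
  congr 1
  unfold geomT
  exact Finset.sum_congr rfl fun i _ => by rw [pow_mul]

lemma pow_modeq_of_dvd (p m : ℕ) (hp : 2 ≤ p) (hm : 0 < m) (k l : ℕ)
    (h : ((p ^ m - 1 : ℕ) : ℤ) ∣ (p : ℤ) ^ k - (p : ℤ) ^ l) : k ≡ l [MOD m] := by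
  have h1 : 1 ≤ p ^ m := Nat.one_le_pow _ _ (by omega)
  -- convert to Nat.ModEq
  have hnat : p ^ l ≡ p ^ k [MOD p ^ m - 1] := by
    rw [Nat.modEq_iff_dvd]
    push_cast
    rw [Nat.cast_sub h1] at h
    push_cast at h
    rw [Nat.cast_sub h1]
    push_cast
    exact h
  -- p^k ≡ p^(k % m)
  have key : ∀ k : ℕ, p ^ k ≡ p ^ (k % m) [MOD p ^ m - 1] := by
    intro k
    conv_lhs => rw [← Nat.div_add_mod k m]
    rw [pow_add, pow_mul]
    calc (p ^ m) ^ (k / m) * p ^ (k % m)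
        ≡ 1 ^ (k / m) * p ^ (k % m) [MOD p ^ m - 1] :=
          Nat.ModEq.mul_right _ (Nat.ModEq.pow _ ((Nat.modEq_iff_dvd' h1).mpr dvd_rfl).symm)
      _ = p ^ (k % m) := by rw [one_pow, one_mul]
  rcases eq_or_lt_of_le (show 1 ≤ m from hm) with hm1 | hm2
  · subst hm1; simp [Nat.ModEq, Nat.mod_one]
  -- m ≥ 2 case:
  have hmod : p ^ (k % m) ≡ p ^ (l % m) [MOD p ^ m - 1] :=
    ((key k).symm.trans hnat.symm).trans (key l)
  have hlt : ∀ j, j < m → p ^ j < p ^ m - 1 := by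
    intro j hj
    have h2 : p ^ (j + 1) ≤ p ^ m := Nat.pow_le_pow_right (by omega) (by omega)
    have h4 : 1 ≤ p ^ j := Nat.one_le_pow _ _ (by omega)
    have h3 : 2 * p ^ j ≤ p ^ (j+1) := by
      rw [pow_succ]; nlinarith
    rcases Nat.eq_zero_or_pos j with hj0 | hj1
    · subst hj0
      have h5 : 2 * 2 ≤ p * p := Nat.mul_le_mul hp hp
      have h6 : p * p ≤ p ^ m := by
        calc p * p = p ^ 2 := by ring
        _ ≤ p ^ m := Nat.pow_le_pow_right (by omega) (by omega)
      simpa using by omega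
    · have h5 : 2 ≤ p ^ j := le_trans hp (Nat.le_self_pow (by omega) p)
      omega
  have heq : p ^ (k % m) = p ^ (l % m) := by
    have hk := hlt (k % m) (Nat.mod_lt k (by omega))
    have hl := hlt (l % m) (Nat.mod_lt l (by omega))
    have := hmod
    unfold Nat.ModEq at this
    rwa [Nat.mod_eq_of_lt (hk), Nat.mod_eq_of_lt (hl)] at this
  have := Nat.pow_right_injective hp heq
  unfold Nat.ModEq
  omega
/-- Criterion for normality in `A` of a subgroup `K` of `ΓL₁(p^m)`, where `A` and `K` are
given in standard form with standard parameters `(d, e, s)` and `(d₁, e₁, s₁)` respectively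
and `K ≤ A`: `K` is normal in `A` if and only if `d₁ ∣ d·(p^{s₁} - 1)` and `d₁` divides the
integer `e₁·(p^s - 1) - e·(p^{s₁} - 1)`. -/
theorem gammaL_one_normality_criterion
    (p m : ℕ) (hp : p.Prime) (hm : 0 < m) (F : Type*) [Field F] [Fintype F]
    (hF : Fintype.card F = p ^ m) (ω : Fˣ) (hω : ∀ x : Fˣ, x ∈ Subgroup.zpowers ω)
    (d e s d₁ e₁ s₁ : ℕ)
    (hd : 1 ≤ d) (hddvd : d ∣ p ^ m - 1) (hs : 1 ≤ s) (hsm : s ∣ m)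
    (he : e ≤ d - 1) (hde : d ∣ e * ((p ^ m - 1) / (p ^ s - 1)))
    (hd₁ : 1 ≤ d₁) (hddvd₁ : d₁ ∣ p ^ m - 1) (hs₁ : 1 ≤ s₁) (hsm₁ : s₁ ∣ m)
    (he₁ : e₁ ≤ d₁ - 1) (hde₁ : d₁ ∣ e₁ * ((p ^ m - 1) / (p ^ s₁ - 1)))
    (A K : Subgroup (Equiv.Perm F))
    (hA : A = Subgroup.closure {g : Equiv.Perm F |
        (∀ x : F, g x = (ω : F) ^ e * x ^ p ^ s) ∨ (∀ x : F, g x = (ω : F) ^ d * x)})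
    (hK : K = Subgroup.closure {g : Equiv.Perm F |
        (∀ x : F, g x = (ω : F) ^ e₁ * x ^ p ^ s₁) ∨ (∀ x : F, g x = (ω : F) ^ d₁ * x)})
    (hKA : K ≤ A) :
    (∀ g ∈ A, ∀ k ∈ K, g * k * g⁻¹ ∈ K) ↔
      (d₁ ∣ d * (p ^ s₁ - 1) ∧
        (d₁ : ℤ) ∣ (e₁ : ℤ) * ((p : ℤ) ^ s - 1) - (e : ℤ) * ((p : ℤ) ^ s₁ - 1)) := by
  classical
  have hp2 : 2 ≤ p := hp.two_le
  have h1pm : 1 ≤ p ^ m := Nat.one_le_pow _ _ (by omega)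
  have hcastp : ∀ t : ℕ, ((p ^ t - 1 : ℕ) : ℤ) = (p : ℤ) ^ t - 1 := fun t => by
    rw [Nat.cast_sub (Nat.one_le_pow _ _ (by omega))]; push_cast; ring
  -- characteristic
  haveI hfact : Fact p.Prime := ⟨hp⟩
  haveI hchar : CharP F p := by
    obtain ⟨q, hq⟩ := CharP.exists F
    haveI := hq
    obtain ⟨n, hqprime, hcard⟩ := FiniteField.card F q
    have h1 : p ∣ q ^ (n : ℕ) := by
      rw [← hcard, hF]; exact dvd_pow_self p (by omega)
    have hpq : p = q := (Nat.prime_dvd_prime_iff_eq hp hqprime).mp (hp.dvd_of_dvd_pow h1)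
    rwa [hpq]
  have hfrobinj : ∀ k : ℕ, Function.Injective fun x : F => x ^ p ^ k := by
    intro k x y hxy
    simp only at hxy
    have h0 : (x - y) ^ p ^ k = 0 := by rw [sub_pow_char_pow, hxy, sub_self]
    have h1 : x - y = 0 := (pow_eq_zero_iff (by positivity)).mp h0
    exact sub_eq_zero.mp h1
  obtain ⟨Pi, hPi⟩ : ∃ f : ℤ → ℕ → Equiv.Perm F,
      ∀ (a : ℤ) (k : ℕ) (x : F), f a k x = (ω : F) ^ a * x ^ p ^ k :=
    ⟨fun a k => powMulPerm (ω ^ a) (p ^ k) (hfrobinj k),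
     fun a k x => by rw [powMulPerm_apply, Units.val_zpow_eq_zpow_val]⟩
  have hω0 : (ω : F) ≠ 0 := ω.ne_zero
  have hωord : orderOf ω = p ^ m - 1 := by
    rw [orderOf_eq_card_of_forall_mem_zpowers hω, Nat.card_eq_fintype_card,
      Fintype.card_units, hF]
  -- π-calculus
  have hπmul : ∀ (a b : ℤ) (k l : ℕ),
      Pi a k * Pi b l = Pi (a + b * (p : ℤ) ^ k) (k + l) := by
    intro a b k l
    ext x
    have hexp : p ^ l * p ^ k = p ^ (k + l) := by rw [← pow_add, Nat.add_comm]
    have hzp : ((ω : F) ^ b) ^ (p ^ k) = (ω : F) ^ (b * (p : ℤ) ^ k) := by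
      rw [← zpow_natCast ((ω : F) ^ b) (p ^ k), ← zpow_mul]
      push_cast
      ring_nf
    rw [Equiv.Perm.mul_apply, hPi, hPi, hPi, mul_pow, ← pow_mul, hexp, hzp,
      ← mul_assoc, ← zpow_add₀ hω0]
  have hπeq1 : ∀ (a : ℤ) (k : ℕ), ((p ^ m - 1 : ℕ) : ℤ) ∣ a → m ∣ k → Pi a k = 1 := by
    intro a k ha hk
    ext x
    rw [hPi, Equiv.Perm.one_apply]
    obtain ⟨t, rfl⟩ := hk
    have h1 : (ω : F) ^ a = 1 := by
      have h2 : (ω : Fˣ) ^ a = 1 := by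
        rw [← orderOf_dvd_iff_zpow_eq_one, hωord]; exact ha
      rw [← Units.val_zpow_eq_zpow_val, h2, Units.val_one]
    rw [h1, one_mul, pow_mul, ← hF]
    exact FiniteField.pow_card_pow t x
  have hπone : Pi 0 0 = 1 := hπeq1 0 0 (dvd_zero _) (dvd_zero _)
  have hmm' : ∀ k : ℕ, k * (m - 1) + k = k * m := by
    intro k
    have h : m - 1 + 1 = m := by omega
    calc k * (m - 1) + k = k * ((m - 1) + 1) := by ring
      _ = k * m := by rw [h]
  have hdvdpow : ∀ t : ℕ, ((p ^ m - 1 : ℕ) : ℤ) ∣ (p : ℤ) ^ (m * t) - 1 := by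
    intro t
    rw [hcastp m, pow_mul]
    exact ⟨∑ i ∈ Finset.range t, ((p : ℤ) ^ m) ^ i, by rw [← geom_sum_mul]; ring⟩
  have hπinv : ∀ (a : ℤ) (k : ℕ),
      (Pi a k)⁻¹ = Pi (-(a * (p : ℤ) ^ (k * (m - 1)))) (k * (m - 1)) := by
    intro a k
    have e1 : (p : ℤ) ^ (k * (m - 1)) * (p : ℤ) ^ k = (p : ℤ) ^ (m * k) := by
      rw [← pow_add, hmm' k, Nat.mul_comm]
    refine inv_eq_of_mul_eq_one_right ?_
    rw [hπmul]
    apply hπeq1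
    · have h2 : ((p ^ m - 1 : ℕ) : ℤ) ∣ -a * ((p : ℤ) ^ (m * k) - 1) :=
        (hdvdpow k).mul_left (-a)
      convert h2 using 1
      linear_combination (-a) * e1
    · exact ⟨k, by have := hmm' k; have h2 : k * m = m * k := Nat.mul_comm k m; omega⟩
  have hdecode : ∀ (a b : ℤ) (k l : ℕ),
      (∀ x : F, (ω : F) ^ a * x ^ p ^ k = (ω : F) ^ b * x ^ p ^ l) →
      ((p ^ m - 1 : ℕ) : ℤ) ∣ a - b ∧ k ≡ l [MOD m] := by
    intro a b k l hfun
    have h1 : (ω : F) ^ a = (ω : F) ^ b := by simpa using hfun 1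
    have h1u : (ω : Fˣ) ^ a = ω ^ b :=
      Units.ext (by rw [Units.val_zpow_eq_zpow_val, Units.val_zpow_eq_zpow_val]; exact h1)
    constructor
    · have h3 : ω ^ (a - b) = 1 := by rw [zpow_sub, h1u, mul_inv_cancel]
      rw [← hωord]
      exact orderOf_dvd_iff_zpow_eq_one.mpr h3
    · have h2 : (ω : F) ^ (p ^ k) = (ω : F) ^ (p ^ l) := by
        have h4 := hfun (ω : F)
        rw [h1] at h4
        exact mul_left_cancel₀ (zpow_ne_zero b hω0) h4
      have h2u : (ω : Fˣ) ^ (p ^ k) = ω ^ (p ^ l) :=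
        Units.ext (by rw [Units.val_pow_eq_pow_val, Units.val_pow_eq_pow_val]; exact h2)
      have h3 : ω ^ (((p ^ k : ℕ) : ℤ) - ((p ^ l : ℕ) : ℤ)) = 1 := by
        rw [zpow_sub, zpow_natCast, zpow_natCast, h2u, mul_inv_cancel]
      have h4 := orderOf_dvd_iff_zpow_eq_one.mpr h3
      rw [hωord] at h4
      apply pow_modeq_of_dvd p m hp2 hm
      push_cast at h4 ⊢
      exact h4
  -- m₁ and geometric sums
  obtain ⟨m₁, hm₁⟩ : ∃ m₁, m = s₁ * m₁ := ⟨m / s₁, (Nat.mul_div_cancel' hsm₁).symm⟩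
  have hps₁pos : (0 : ℤ) < (p : ℤ) ^ s₁ - 1 := by
    have h1 : (2 : ℤ) ≤ (p : ℤ) := by exact_mod_cast hp2
    have h2 : (2 : ℤ) ≤ (p : ℤ) ^ s₁ := by
      calc (2:ℤ) ≤ (p:ℤ) := h1
        _ = (p:ℤ) ^ 1 := (pow_one _).symm
        _ ≤ (p:ℤ) ^ s₁ := pow_le_pow_right₀ (by linarith) (by omega)
    linarith
  have hTm1 : (d₁ : ℤ) ∣ (e₁ : ℤ) * geomT p s₁ m₁ := by
    have hdvdq : (p ^ s₁ - 1) ∣ (p ^ m - 1) := by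
      rw [hm₁, pow_mul]
      have := Nat.sub_dvd_pow_sub_pow (p ^ s₁) 1 m₁
      simpa using this
    have hq₁ : ((p ^ m - 1) / (p ^ s₁ - 1)) * (p ^ s₁ - 1) = p ^ m - 1 :=
      Nat.div_mul_cancel hdvdq
    have h2 : (((p ^ m - 1) / (p ^ s₁ - 1) : ℕ) : ℤ) * ((p : ℤ) ^ s₁ - 1) = (p : ℤ) ^ m - 1 := by
      have h3 := congrArg (fun n : ℕ => (n : ℤ)) hq₁
      simp only [Nat.cast_mul] at h3
      rwa [hcastp s₁, hcastp m] at h3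
    have h3 : geomT p s₁ m₁ * ((p : ℤ) ^ s₁ - 1) = (p : ℤ) ^ m - 1 := by
      rw [geomT_mul_eq, ← hm₁]
    have hcast : (((p ^ m - 1) / (p ^ s₁ - 1) : ℕ) : ℤ) = geomT p s₁ m₁ :=
      mul_right_cancel₀ (by linarith) (h2.trans h3.symm)
    have h4 : (d₁ : ℤ) ∣ ((e₁ * ((p ^ m - 1) / (p ^ s₁ - 1)) : ℕ) : ℤ) :=
      Int.natCast_dvd_natCast.mpr hde₁
    rwa [Nat.cast_mul, hcast] at h4
  have hTm : ∀ t : ℕ, (d₁ : ℤ) ∣ (e₁ : ℤ) * geomT p s₁ (m₁ * t) := by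
    intro t
    induction t with
    | zero => simp [geomT_zero]
    | succ t ih =>
        have h1 : (e₁ : ℤ) * geomT p s₁ (m₁ * (t + 1)) =
            (e₁ : ℤ) * geomT p s₁ (m₁ * t) +
              (p : ℤ) ^ (s₁ * (m₁ * t)) * ((e₁ : ℤ) * geomT p s₁ m₁) := by
          rw [Nat.mul_succ, geomT_add]; ring
        rw [h1]
        exact dvd_add ih (hTm1.mul_left _)
  have hTeq : ∀ c c' : ℕ, c ≡ c' [MOD m₁] →
      (d₁ : ℤ) ∣ (e₁ : ℤ) * (geomT p s₁ c - geomT p s₁ c') := by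
    have key : ∀ c c' : ℕ, c' ≤ c → c ≡ c' [MOD m₁] →
        (d₁ : ℤ) ∣ (e₁ : ℤ) * (geomT p s₁ c - geomT p s₁ c') := by
      intro c c' hle hcc
      obtain ⟨t, ht⟩ := (Nat.modEq_iff_dvd' hle).mp hcc.symm
      have hc : c = c' + m₁ * t := by omega
      subst hc
      have h1 : (e₁ : ℤ) * (geomT p s₁ (c' + m₁ * t) - geomT p s₁ c') =
          (p : ℤ) ^ (s₁ * c') * ((e₁ : ℤ) * geomT p s₁ (m₁ * t)) := by
        rw [geomT_add]; ring
      rw [h1]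
      exact (hTm t).mul_left _
    intro c c' hcc
    rcases le_total c' c with h | h
    · exact key c c' h hcc
    · have h1 := key c' c h hcc.symm
      have h2 : (e₁ : ℤ) * (geomT p s₁ c - geomT p s₁ c') =
          -((e₁ : ℤ) * (geomT p s₁ c' - geomT p s₁ c)) := by ring
      rw [h2]
      exact dvd_neg.mpr h1
  have hd₁int : (d₁ : ℤ) ∣ (p : ℤ) ^ m - 1 := by
    rw [← hcastp m]; exact_mod_cast hddvd₁
  have hd₁powm : ∀ t : ℕ, (d₁ : ℤ) ∣ (p : ℤ) ^ (m * t) - 1 := by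
    intro t
    refine hd₁int.trans ?_
    have := hdvdpow t
    rwa [hcastp m] at this
  have hcop : ∀ t : ℕ, IsCoprime ((d₁ : ℤ)) ((p : ℤ) ^ t) := by
    have hnotdvd : ¬ p ∣ d₁ := by
      intro hpd
      have h1 : p ∣ p ^ m - 1 := hpd.trans hddvd₁
      have h2 : p ∣ p ^ m := dvd_pow_self p (by omega)
      have h3 : p ^ m - (p ^ m - 1) = 1 := by omega
      have h4 : p ∣ 1 := h3 ▸ Nat.dvd_sub h2 h1
      have := Nat.dvd_one.mp h4
      omega
    have hc : Nat.Coprime d₁ p := (hp.coprime_iff_not_dvd.mpr hnotdvd).symm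
    intro t
    exact (Nat.isCoprime_iff_coprime.mpr hc).pow_right
  -- membership of standard elements in K
  have hσ₁K : Pi (e₁ : ℤ) s₁ ∈ K := by
    rw [hK]
    apply Subgroup.subset_closure
    left
    intro x
    rw [hPi, zpow_natCast]
  have hτ₁K : Pi (d₁ : ℤ) 0 ∈ K := by
    rw [hK]
    apply Subgroup.subset_closure
    right
    intro x
    rw [hPi, zpow_natCast, pow_zero, pow_one]
  have hτ₁powK : ∀ t : ℤ, Pi ((d₁ : ℤ) * t) 0 ∈ K := by
    intro t
    induction t using Int.induction_on with
    | zero => rw [show ((d₁ : ℤ) * 0) = 0 by ring, hπone]; exact K.one_mem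
    | succ t ih =>
        have h1 : Pi ((d₁ : ℤ) * (t + 1)) 0 = Pi ((d₁ : ℤ) * t) 0 * Pi (d₁ : ℤ) 0 := by
          rw [hπmul]
          congr 1
          rw [pow_zero]; ring
        rw [h1]; exact K.mul_mem ih hτ₁K
    | pred t ih =>
        have hinv : (Pi (d₁ : ℤ) 0)⁻¹ = Pi (-(d₁ : ℤ)) 0 := by
          have := hπinv (d₁ : ℤ) 0
          simpa using this
        have h1 : Pi ((d₁ : ℤ) * (-t - 1)) 0 = Pi ((d₁ : ℤ) * (-t)) 0 * Pi (-(d₁ : ℤ)) 0 := by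
          rw [hπmul]
          congr 1
          rw [pow_zero]; ring
        rw [h1]
        exact K.mul_mem ih (hinv ▸ K.inv_mem hτ₁K)
  have hgeomK : ∀ c : ℕ, Pi ((e₁ : ℤ) * geomT p s₁ c) (s₁ * c) ∈ K := by
    intro c
    induction c with
    | zero => rw [geomT_zero, mul_zero, Nat.mul_zero, hπone]; exact K.one_mem
    | succ c ih =>
        have h1 : Pi ((e₁ : ℤ) * geomT p s₁ (c + 1)) (s₁ * (c + 1)) =
            Pi ((e₁ : ℤ) * geomT p s₁ c) (s₁ * c) * Pi (e₁ : ℤ) s₁ := by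
          rw [hπmul]
          congr 1
          rw [geomT_add p s₁ c 1, geomT_one]; ring
        rw [h1]
        exact K.mul_mem ih hσ₁K
  have hmemK : ∀ (a : ℤ) (c : ℕ), (d₁ : ℤ) ∣ a - (e₁ : ℤ) * geomT p s₁ c →
      Pi a (s₁ * c) ∈ K := by
    rintro a c ⟨t, ht⟩
    have h1 : Pi a (s₁ * c) = Pi ((d₁ : ℤ) * t) 0 * Pi ((e₁ : ℤ) * geomT p s₁ c) (s₁ * c) := by
      rw [hπmul]
      congr 1
      · rw [pow_zero]; linear_combination ht
      · omega
    rw [h1]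
    exact K.mul_mem (hτ₁powK t) (hgeomK c)
  have hπext : ∀ (a a' : ℤ) (k k' : ℕ), a = a' → k = k' → Pi a k = Pi a' k' :=
    fun _ _ _ _ h1 h2 => by rw [h1, h2]
  -- generators of A
  have hσA : Pi (e : ℤ) s ∈ A := by
    rw [hA]; exact Subgroup.subset_closure (Or.inl fun x => by rw [hPi, zpow_natCast])
  have hτA : Pi (d : ℤ) 0 ∈ A := by
    rw [hA]
    exact Subgroup.subset_closure (Or.inr fun x => by rw [hPi, zpow_natCast, pow_zero, pow_one])
  -- arithmetic identities
  have h7 : s₁ * (m₁ * s) = s * m := by rw [hm₁]; ring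
  have h8 : s₁ * (m₁ * s + 1) = s * m + s₁ := by
    calc s₁ * (m₁ * s + 1) = s₁ * (m₁ * s) + s₁ := by ring
      _ = s * m + s₁ := by rw [h7]
  -- the two fundamental conjugations
  have hconj1 : Pi (d : ℤ) 0 * Pi (e₁ : ℤ) s₁ * (Pi (d : ℤ) 0)⁻¹ =
      Pi ((d : ℤ) + e₁ - d * (p : ℤ) ^ s₁) s₁ := by
    rw [hπinv, hπmul, hπmul]
    exact hπext _ _ _ _ (by simp only [Nat.zero_mul, pow_zero, mul_one, zero_add]; ring)
      (by simp)
  have hconj2 : Pi (e : ℤ) s * Pi (e₁ : ℤ) s₁ * (Pi (e : ℤ) s)⁻¹ =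
      Pi ((e : ℤ) + e₁ * (p : ℤ) ^ s - e * (p : ℤ) ^ (s * m + s₁)) (s₁ * (m₁ * s + 1)) := by
    rw [hπinv, hπmul, hπmul]
    refine hπext _ _ _ _ ?_ ?_
    · have E : (p : ℤ) ^ (s * (m - 1)) * (p : ℤ) ^ (s + s₁) = (p : ℤ) ^ (s * m + s₁) := by
        rw [← pow_add]; congr 1; have := hmm' s; omega
      linear_combination (-(e : ℤ)) * E
    · have := hmm' s; omega
  -- cancellation of s₁ in congruences
  have hcancel : ∀ c c' : ℕ, s₁ * c ≡ s₁ * c' [MOD m] → c ≡ c' [MOD m₁] := by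
    intro c c' h
    rw [Nat.modEq_iff_dvd] at h ⊢
    have h3 : ((m : ℕ) : ℤ) = (s₁ : ℤ) * (m₁ : ℤ) := by rw [hm₁]; push_cast; ring
    have h2 : (s₁ : ℤ) * (m₁ : ℤ) ∣ (s₁ : ℤ) * ((c' : ℤ) - c) := by
      rw [← h3]
      convert h using 1
      push_cast; ring
    have hs₁0 : (s₁ : ℤ) ≠ 0 := by
      have : s₁ ≠ 0 := by omega
      exact_mod_cast this
    exact (mul_dvd_mul_iff_left hs₁0).mp h2
  -- every element of K has standard shape
  have hKP : ∀ h ∈ K, ∃ (a : ℤ) (c : ℕ),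
      (∀ x : F, h x = (ω : F) ^ a * x ^ p ^ (s₁ * c)) ∧
        (d₁ : ℤ) ∣ a - (e₁ : ℤ) * geomT p s₁ c := by
    intro h hh
    rw [hK] at hh
    refine Subgroup.closure_induction ?_ ?_ ?_ ?_ hh
    · rintro g (hg | hg)
      · exact ⟨(e₁ : ℤ), 1, fun x => by rw [hg x, zpow_natCast, Nat.mul_one],
          by rw [geomT_one]; simp⟩
      · exact ⟨(d₁ : ℤ), 0, fun x => by rw [hg x, zpow_natCast, Nat.mul_zero, pow_zero, pow_one],
          by simp [geomT_zero]⟩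
    · exact ⟨0, 0, fun x => by simp, by simp [geomT_zero]⟩
    · rintro g h' _ _ ⟨a, c, hg, hga⟩ ⟨b, c', hh', hhb⟩
      have hgE : g = Pi a (s₁ * c) := Equiv.ext fun x => by rw [hg x, hPi]
      have hhE : h' = Pi b (s₁ * c') := Equiv.ext fun x => by rw [hh' x, hPi]
      refine ⟨a + b * (p : ℤ) ^ (s₁ * c), c + c', fun x => ?_, ?_⟩
      · rw [hgE, hhE, hπmul, show s₁ * c + s₁ * c' = s₁ * (c + c') from by ring, hPi]
      · have h1 : (a + b * (p : ℤ) ^ (s₁ * c)) - (e₁ : ℤ) * geomT p s₁ (c + c') =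
            (a - (e₁ : ℤ) * geomT p s₁ c) +
              (p : ℤ) ^ (s₁ * c) * (b - (e₁ : ℤ) * geomT p s₁ c') := by
          rw [geomT_add]; ring
        rw [h1]
        exact dvd_add hga (hhb.mul_left _)
    · rintro g _ ⟨a, c, hg, hga⟩
      have hgE : g = Pi a (s₁ * c) := Equiv.ext fun x => by rw [hg x, hPi]
      refine ⟨-(a * (p : ℤ) ^ (s₁ * (c * (m - 1)))), c * (m - 1), fun x => ?_, ?_⟩
      · rw [hgE, hπinv, show s₁ * c * (m - 1) = s₁ * (c * (m - 1)) from Nat.mul_assoc _ _ _, hPi]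
      · have E1 : (p : ℤ) ^ (s₁ * c) * (p : ℤ) ^ (s₁ * (c * (m - 1))) =
            (p : ℤ) ^ (m * (s₁ * c)) := by
          rw [← pow_add]; congr 1
          have h1 := hmm' (s₁ * c)
          have h2 : s₁ * (c * (m - 1)) = s₁ * c * (m - 1) := (Nat.mul_assoc _ _ _).symm
          have h3 : s₁ * c * m = m * (s₁ * c) := Nat.mul_comm _ _
          omega
        have D2 : (d₁ : ℤ) ∣ (e₁ : ℤ) * geomT p s₁ (c + c * (m - 1)) := by
          have h1 : c + c * (m - 1) = c * m := by have := hmm' c; omega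
          have h2 : c * m = m₁ * (c * s₁) := by rw [hm₁]; ring
          rw [h1, h2]
          exact hTm (c * s₁)
        refine (hcop (s₁ * c)).dvd_of_dvd_mul_left ?_
        obtain ⟨u, hu⟩ := hga
        obtain ⟨v, hv⟩ := D2
        obtain ⟨w, hw⟩ := hd₁powm (s₁ * c)
        refine ⟨-u - a * w - v, ?_⟩
        have hT3 : geomT p s₁ (c + c * (m - 1)) =
            geomT p s₁ c + (p : ℤ) ^ (s₁ * c) * geomT p s₁ (c * (m - 1)) :=
          geomT_add p s₁ c (c * (m - 1))
        linear_combination -hu - a * hw - hv - a * E1 + (e₁ : ℤ) * hT3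
  have hmemK' : ∀ (a : ℤ) (k c : ℕ), k = s₁ * c → (d₁ : ℤ) ∣ a - (e₁ : ℤ) * geomT p s₁ c →
      Pi a k ∈ K := fun a k c h1 h2 => by rw [h1]; exact hmemK a c h2
  have hTexp : geomT p s₁ (m₁ * s + 1) = geomT p s₁ (m₁ * s) + (p : ℤ) ^ (s * m) := by
    rw [geomT_add p s₁ (m₁ * s) 1, geomT_one, h7]; ring
  have hpow1 : (p : ℤ) ^ (s * m + s₁) = (p : ℤ) ^ (s * m) * (p : ℤ) ^ s₁ := pow_add _ _ _
  have hZ : (d₁ : ℤ) ∣ (p : ℤ) ^ (s * m) - 1 := by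
    have := hd₁powm s; rwa [Nat.mul_comm] at this
  constructor
  · -- normality implies the two conditions
    intro hnorm
    have hext : ∀ (a₀ : ℤ) (c₀ : ℕ), Pi a₀ (s₁ * c₀) ∈ K →
        (d₁ : ℤ) ∣ a₀ - (e₁ : ℤ) * geomT p s₁ c₀ := by
      intro a₀ c₀ hmem
      obtain ⟨a, c, hfun, hdvd⟩ := hKP _ hmem
      have hdec := hdecode a₀ a (s₁ * c₀) (s₁ * c)
        (fun x => by rw [← hPi, hfun x])
      have h5 : (d₁ : ℤ) ∣ a₀ - a :=
        dvd_trans (Int.natCast_dvd_natCast.mpr hddvd₁) hdec.1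
      have h6 := hTeq c c₀ (hcancel c c₀ hdec.2.symm)
      have h9 : a₀ - (e₁ : ℤ) * geomT p s₁ c₀ =
          (a₀ - a) + (a - (e₁ : ℤ) * geomT p s₁ c) +
            (e₁ : ℤ) * (geomT p s₁ c - geomT p s₁ c₀) := by ring
      rw [h9]
      exact dvd_add (dvd_add h5 hdvd) h6
    constructor
    · -- first condition
      have h := hnorm _ hτA _ hσ₁K
      rw [hconj1] at h
      have h' : Pi ((d : ℤ) + e₁ - d * (p : ℤ) ^ s₁) (s₁ * 1) ∈ K := by
        rw [Nat.mul_one]; exact h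
      have h1 := hext _ 1 h'
      rw [geomT_one] at h1
      rw [← Int.natCast_dvd_natCast, Nat.cast_mul, hcastp s₁]
      have h2 : (d : ℤ) * ((p : ℤ) ^ s₁ - 1) =
          -(((d : ℤ) + e₁ - d * (p : ℤ) ^ s₁) - e₁ * 1) := by ring
      rw [h2]
      exact dvd_neg.mpr h1
    · -- second condition
      have h := hnorm _ hσA _ hσ₁K
      rw [hconj2] at h
      have h1 := hext _ (m₁ * s + 1) h
      rw [hTexp, hpow1] at h1
      obtain ⟨u, hu⟩ := h1
      obtain ⟨v, hv⟩ := hTm s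
      obtain ⟨w, hw⟩ := hZ
      refine ⟨u + v + w * ((e : ℤ) * (p : ℤ) ^ s₁ + e₁), ?_⟩
      have hvs : (e₁ : ℤ) * geomT p s₁ (m₁ * s) = (d₁ : ℤ) * v := hv
      linear_combination hu + hvs + ((e : ℤ) * (p : ℤ) ^ s₁ + (e₁ : ℤ)) * hw
  · -- the two conditions imply normality
    rintro ⟨hc1, hc2'⟩ g hg k hk
    have hc1' : (d₁ : ℤ) ∣ (d : ℤ) * ((p : ℤ) ^ s₁ - 1) := by
      have := Int.natCast_dvd_natCast.mpr hc1
      rwa [Nat.cast_mul, hcastp s₁] at this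
    -- the eight conjugation facts
    have hM1 : Pi (d : ℤ) 0 * Pi (e₁ : ℤ) s₁ * (Pi (d : ℤ) 0)⁻¹ ∈ K := by
      rw [hconj1]
      refine hmemK' _ _ 1 (Nat.mul_one s₁).symm ?_
      rw [geomT_one]
      obtain ⟨u, hu⟩ := hc1'
      exact ⟨-u, by linear_combination -hu⟩
    have hM2 : Pi (d : ℤ) 0 * Pi (d₁ : ℤ) 0 * (Pi (d : ℤ) 0)⁻¹ ∈ K := by
      have hc : Pi (d : ℤ) 0 * Pi (d₁ : ℤ) 0 * (Pi (d : ℤ) 0)⁻¹ = Pi (d₁ : ℤ) 0 := by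
        rw [hπinv, hπmul, hπmul]
        exact hπext _ _ _ _ (by simp only [Nat.zero_mul, pow_zero, mul_one, zero_add]; ring)
          (by simp)
      rw [hc]; exact hτ₁K
    have hM3 : (Pi (d : ℤ) 0)⁻¹ * Pi (e₁ : ℤ) s₁ * ((Pi (d : ℤ) 0)⁻¹)⁻¹ ∈ K := by
      rw [inv_inv]
      have hc : (Pi (d : ℤ) 0)⁻¹ * Pi (e₁ : ℤ) s₁ * Pi (d : ℤ) 0 =
          Pi (-(d : ℤ) + e₁ + d * (p : ℤ) ^ s₁) s₁ := by
        rw [hπinv, hπmul, hπmul]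
        exact hπext _ _ _ _
          (by simp only [Nat.zero_mul, pow_zero, mul_one, zero_add]; try ring) (by simp)
      rw [hc]
      refine hmemK' _ _ 1 (Nat.mul_one s₁).symm ?_
      rw [geomT_one]
      obtain ⟨u, hu⟩ := hc1'
      exact ⟨u, by linear_combination hu⟩
    have hM4 : (Pi (d : ℤ) 0)⁻¹ * Pi (d₁ : ℤ) 0 * ((Pi (d : ℤ) 0)⁻¹)⁻¹ ∈ K := by
      rw [inv_inv]
      have hc : (Pi (d : ℤ) 0)⁻¹ * Pi (d₁ : ℤ) 0 * Pi (d : ℤ) 0 = Pi (d₁ : ℤ) 0 := by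
        rw [hπinv, hπmul, hπmul]
        exact hπext _ _ _ _ (by simp only [Nat.zero_mul, pow_zero, mul_one, zero_add]; ring)
          (by simp)
      rw [hc]; exact hτ₁K
    have hM5 : Pi (e : ℤ) s * Pi (e₁ : ℤ) s₁ * (Pi (e : ℤ) s)⁻¹ ∈ K := by
      rw [hconj2]
      refine hmemK' _ _ (m₁ * s + 1) rfl ?_
      rw [hTexp, hpow1]
      obtain ⟨u, hu⟩ := hc2'
      obtain ⟨v, hv⟩ := hTm s
      obtain ⟨w, hw⟩ := hZ
      have hvs : (e₁ : ℤ) * geomT p s₁ (m₁ * s) = (d₁ : ℤ) * v := hv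
      exact ⟨u - v - w * ((e : ℤ) * (p : ℤ) ^ s₁ + e₁),
        by linear_combination hu - hvs - ((e : ℤ) * (p : ℤ) ^ s₁ + (e₁ : ℤ)) * hw⟩
    have hM6 : Pi (e : ℤ) s * Pi (d₁ : ℤ) 0 * (Pi (e : ℤ) s)⁻¹ ∈ K := by
      have hc : Pi (e : ℤ) s * Pi (d₁ : ℤ) 0 * (Pi (e : ℤ) s)⁻¹ =
          Pi ((e : ℤ) + d₁ * (p : ℤ) ^ s - e * (p : ℤ) ^ (s * m)) (s₁ * (m₁ * s)) := by
        rw [hπinv, hπmul, hπmul]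
        refine hπext _ _ _ _ ?_ ?_
        · have E6 : (p : ℤ) ^ (s * (m - 1)) * (p : ℤ) ^ (s + 0) = (p : ℤ) ^ (s * m) := by
            rw [← pow_add]; congr 1; have := hmm' s; omega
          linear_combination (-(e : ℤ)) * E6
        · have := hmm' s; omega
      rw [hc]
      refine hmemK' _ _ (m₁ * s) rfl ?_
      obtain ⟨v, hv⟩ := hTm s
      obtain ⟨w, hw⟩ := hZ
      have hvs : (e₁ : ℤ) * geomT p s₁ (m₁ * s) = (d₁ : ℤ) * v := hv
      exact ⟨(p : ℤ) ^ s - e * w - v, by linear_combination (-(e : ℤ)) * hw - hvs⟩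
    have hM7 : (Pi (e : ℤ) s)⁻¹ * Pi (e₁ : ℤ) s₁ * ((Pi (e : ℤ) s)⁻¹)⁻¹ ∈ K := by
      rw [inv_inv]
      have hc : (Pi (e : ℤ) s)⁻¹ * Pi (e₁ : ℤ) s₁ * Pi (e : ℤ) s =
          Pi (-((e : ℤ) * (p : ℤ) ^ (s * (m - 1))) + e₁ * (p : ℤ) ^ (s * (m - 1)) +
            e * (p : ℤ) ^ (s * (m - 1) + s₁)) (s₁ * (m₁ * s + 1)) := by
        rw [hπinv, hπmul, hπmul]
        refine hπext _ _ _ _ (by ring) ?_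
        · have := hmm' s; have := h8; omega
      rw [hc]
      refine hmemK' _ _ (m₁ * s + 1) rfl ?_
      refine (hcop s).dvd_of_dvd_mul_left ?_
      obtain ⟨u, hu⟩ := hc2'
      obtain ⟨v, hv⟩ := hTm s
      obtain ⟨w, hw⟩ := hZ
      have hvs : (e₁ : ℤ) * geomT p s₁ (m₁ * s) = (d₁ : ℤ) * v := hv
      have E7a : (p : ℤ) ^ (s * (m - 1)) * (p : ℤ) ^ s = (p : ℤ) ^ (s * m) := by
        rw [← pow_add]; congr 1; have := hmm' s; omega
      have E7b : (p : ℤ) ^ (s * (m - 1) + s₁) * (p : ℤ) ^ s =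
          (p : ℤ) ^ (s * m) * (p : ℤ) ^ s₁ := by
        rw [← pow_add, ← pow_add]; congr 1; have := hmm' s; omega
      refine ⟨-u - (p : ℤ) ^ s * v +
        ((e₁ : ℤ) - e + e * (p : ℤ) ^ s₁ - e₁ * (p : ℤ) ^ s) * w, ?_⟩
      rw [hTexp]
      linear_combination -hu - (p : ℤ) ^ s * hvs +
        ((e₁ : ℤ) - e + e * (p : ℤ) ^ s₁ - e₁ * (p : ℤ) ^ s) * hw +
        ((e₁ : ℤ) - e) * E7a + (e : ℤ) * E7b
    have hM8 : (Pi (e : ℤ) s)⁻¹ * Pi (d₁ : ℤ) 0 * ((Pi (e : ℤ) s)⁻¹)⁻¹ ∈ K := by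
      rw [inv_inv]
      have hc : (Pi (e : ℤ) s)⁻¹ * Pi (d₁ : ℤ) 0 * Pi (e : ℤ) s =
          Pi ((d₁ : ℤ) * (p : ℤ) ^ (s * (m - 1))) (s₁ * (m₁ * s)) := by
        rw [hπinv, hπmul, hπmul]
        refine hπext _ _ _ _ (by ring) ?_
        · have := hmm' s; omega
      rw [hc]
      refine hmemK' _ _ (m₁ * s) rfl ?_
      obtain ⟨v, hv⟩ := hTm s
      have hvs : (e₁ : ℤ) * geomT p s₁ (m₁ * s) = (d₁ : ℤ) * v := hv
      exact ⟨(p : ℤ) ^ (s * (m - 1)) - v, by linear_combination -hvs⟩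
    -- conjugation by any of the four elements maps K into K
    have hconjgen : ∀ g₀ : Equiv.Perm F,
        (g₀ = Pi (e : ℤ) s ∨ g₀ = Pi (d : ℤ) 0 ∨
          g₀ = (Pi (e : ℤ) s)⁻¹ ∨ g₀ = (Pi (d : ℤ) 0)⁻¹) →
        ∀ h' ∈ K, g₀ * h' * g₀⁻¹ ∈ K := by
      intro g₀ hg₀ h' hh'
      have hsub : K ≤ Subgroup.comap (MulAut.conj g₀).toMonoidHom K := by
        nth_rewrite 1 [hK]
        rw [Subgroup.closure_le]
        rintro h'' hset
        have h2 : h'' = Pi (e₁ : ℤ) s₁ ∨ h'' = Pi (d₁ : ℤ) 0 := by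
          rcases hset with h | h
          · exact Or.inl (Equiv.ext fun x => by rw [h x, hPi, zpow_natCast])
          · exact Or.inr (Equiv.ext fun x => by rw [h x, hPi, zpow_natCast, pow_zero, pow_one])
        simp only [SetLike.mem_coe, Subgroup.mem_comap, MulEquiv.coe_toMonoidHom,
          MulAut.conj_apply]
        rcases hg₀ with rfl | rfl | rfl | rfl <;> rcases h2 with rfl | rfl
        · exact hM5
        · exact hM6
        · exact hM1
        · exact hM2
        · exact hM7
        · exact hM8
        · exact hM3
        · exact hM4
      have h3 := hsub hh'
      rw [Subgroup.mem_comap] at h3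
      simpa [MulAut.conj_apply] using h3
    -- conclude normality
    suffices hAN : A ≤ Subgroup.normalizer (K : Set (Equiv.Perm F)) by
      exact (Subgroup.mem_normalizer_iff.mp (hAN hg) k).mp hk
    rw [hA, Subgroup.closure_le]
    rintro g' hg'
    have hg2 : g' = Pi (e : ℤ) s ∨ g' = Pi (d : ℤ) 0 := by
      rcases hg' with h | h
      · exact Or.inl (Equiv.ext fun x => by rw [h x, hPi, zpow_natCast])
      · exact Or.inr (Equiv.ext fun x => by rw [h x, hPi, zpow_natCast, pow_zero, pow_one])
    have hmain : ∀ g₀ : Equiv.Perm F, (g₀ = Pi (e : ℤ) s ∨ g₀ = Pi (d : ℤ) 0) →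
        g₀ ∈ Subgroup.normalizer (K : Set (Equiv.Perm F)) := by
      rintro g₀ hg₀
      rw [Subgroup.mem_normalizer_iff]
      intro h
      constructor
      · intro hh
        rcases hg₀ with rfl | rfl
        · exact hconjgen _ (Or.inl rfl) h hh
        · exact hconjgen _ (Or.inr (Or.inl rfl)) h hh
      · intro hh
        have h4 : g₀⁻¹ * (g₀ * h * g₀⁻¹) * (g₀⁻¹)⁻¹ = h := by group
        rcases hg₀ with rfl | rfl
        · have h5 := hconjgen _ (Or.inr (Or.inr (Or.inl rfl))) _ hh
          rwa [h4] at h5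
        · have h5 := hconjgen _ (Or.inr (Or.inr (Or.inr rfl))) _ hh
          rwa [h4] at h5
    exact hmain g' hg2
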